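/- Let 0 < q < 1, let l be an integer, let P be a nonzero Laurent polynomial with complex coefficients whose distinct nonzero roots are α_1, …, α_k with multiplicities m_1, …, m_k, and let T : ℂ[z,z⁻¹] → ℂ be ℂ-linear and satisfy T(P(qz)R(qz)) = T(z^l P(q^{−1}z)R(q^{−1}z)) for every Laurent polynomial R. Define w ∈ V by w_m = T(z^{−m}). Then there exist complex numbers r_{i,j} (j = 1, …, k, i = 0, …, m_j − 1) such that w(q^{−1}z) − q^l (z^l · w(qz)) = ∑_{i,j} r_{i,j} f_{i,j} in V. -/

import Mathlib

open LaurentPolynomial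

/-- Multiplication of a doubly infinite formal series `w : ℤ → ℂ` by a Laurent
polynomial `P`, defined coefficientwise: `(P·w)_m = ∑_j P_j w_{m-j}`. -/
noncomputable def laurentMul (P : LaurentPolynomial ℂ) : (ℤ → ℂ) →ₗ[ℂ] (ℤ → ℂ) where
  toFun w m := ∑ j ∈ P.coeff.support, P.coeff j * w (m - j)
  map_add' u v := by
    funext m
    simp [mul_add, Finset.sum_add_distrib]
  map_smul' c w := by
    funext m
    simp only [Pi.smul_apply, smul_eq_mul, RingHom.id_apply, Finset.mul_sum]
    exact Finset.sum_congr rfl fun j _ => by ring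

/-- The Laurent polynomial `P(sz)` obtained from `P` by substituting `z ↦ sz`. -/
noncomputable def lscale (s : ℂ) (P : LaurentPolynomial ℂ) : LaurentPolynomial ℂ :=
  ∑ j ∈ P.coeff.support, C (P.coeff j * s ^ j) * T j

/-- The series `w(sz)`, whose `m`-th coefficient is `s^m wₘ`. -/
noncomputable def vscale (s : ℂ) (w : ℤ → ℂ) : ℤ → ℂ :=
  fun m => s ^ m * w m

/-- The doubly infinite series `f_{i,α} = ∑_{l ∈ ℤ} l(l-1)⋯(l-i+1) α^{-l} z^l`,
whose `l`-th coefficient is the falling factorial with `i` factors times `α^{-l}`. -/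
noncomputable def fSeries (i : ℕ) (α : ℂ) : ℤ → ℂ :=
  fun l => (∏ t ∈ Finset.range i, ((l : ℂ) - t)) * α ^ (-l)

lemma laurentMul_apply (P : LaurentPolynomial ℂ) (u : ℤ → ℂ) (m : ℤ) :
    laurentMul P u m = P.coeff.sum (fun j a => a * u (m - j)) := rfl

lemma laurentMul_single (j : ℤ) (a : ℂ) (u : ℤ → ℂ) :
    laurentMul (AddMonoidAlgebra.single j a) u = fun m => a * u (m - j) := by
  funext m
  rw [laurentMul_apply, AddMonoidAlgebra.sum_single_index (by simp)]

lemma laurentMul_zero_poly (u : ℤ → ℂ) : laurentMul (0 : LaurentPolynomial ℂ) u = 0 := by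
  funext m; rw [laurentMul_apply, AddMonoidAlgebra.coeff_zero, Finsupp.sum_zero_index]; rfl

lemma laurentMul_add_poly (P Q : LaurentPolynomial ℂ) (u : ℤ → ℂ) :
    laurentMul (P + Q) u = laurentMul P u + laurentMul Q u := by
  funext m
  rw [Pi.add_apply, laurentMul_apply, laurentMul_apply, laurentMul_apply, AddMonoidAlgebra.coeff_add,
    Finsupp.sum_add_index' (by simp) (fun j a b => add_mul a b _)]

lemma laurentMul_sub_poly (P Q : LaurentPolynomial ℂ) (u : ℤ → ℂ) :
    laurentMul (P - Q) u = laurentMul P u - laurentMul Q u := by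
  have h := laurentMul_add_poly (P - Q) Q u
  rw [sub_add_cancel] at h
  rw [h]; abel

lemma laurentMul_one (u : ℤ → ℂ) : laurentMul (1 : LaurentPolynomial ℂ) u = u := by
  have : (1 : LaurentPolynomial ℂ) = AddMonoidAlgebra.single 0 1 := rfl
  rw [this, laurentMul_single]
  funext m; simp

lemma laurentMul_T (n : ℤ) (u : ℤ → ℂ) : laurentMul (T n) u = fun m => u (m - n) := by
  have : (T n : LaurentPolynomial ℂ) = AddMonoidAlgebra.single n 1 := rfl
  rw [this, laurentMul_single]
  funext m; simp

lemma laurentMul_mul (P Q : LaurentPolynomial ℂ) (u : ℤ → ℂ) :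
    laurentMul (P * Q) u = laurentMul P (laurentMul Q u) := by
  induction P using AddMonoidAlgebra.induction_linear with
  | zero => simp [laurentMul_zero_poly]
  | add f g hf hg => rw [add_mul, laurentMul_add_poly, hf, hg, laurentMul_add_poly]
  | single j a =>
    induction Q using AddMonoidAlgebra.induction_linear with
    | zero => simp [laurentMul_zero_poly, (laurentMul (AddMonoidAlgebra.single j a)).map_zero]
    | add f g hf hg =>
      rw [mul_add, laurentMul_add_poly, hf, hg, laurentMul_add_poly,
        (laurentMul (AddMonoidAlgebra.single j a)).map_add]
    | single j' b =>
      rw [AddMonoidAlgebra.single_mul_single, laurentMul_single, laurentMul_single,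
        laurentMul_single]
      funext m
      simp only
      rw [sub_sub, mul_assoc]

lemma laurentMul_X_sub (a : ℂ) (u : ℤ → ℂ) :
    laurentMul (Polynomial.toLaurent (Polynomial.X - Polynomial.C a)) u
      = fun n => u (n - 1) - a * u n := by
  rw [map_sub, Polynomial.toLaurent_X, Polynomial.toLaurent_C, laurentMul_sub_poly,
    laurentMul_T]
  have hC : (C a : LaurentPolynomial ℂ) = AddMonoidAlgebra.single 0 a := by
    rw [single_eq_C_mul_T, T_zero, mul_one]
  rw [hC, laurentMul_single]
  funext n; simp

lemma prod_shift (i : ℕ) (x : ℂ) :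
    (∏ t ∈ Finset.range i, (x - t)) * (x - i) = x * ∏ t ∈ Finset.range i, (x - 1 - t) := by
  have h2 := Finset.prod_range_succ' (fun t : ℕ => x - t) i
  rw [Finset.prod_range_succ] at h2
  rw [h2]
  have : ∀ t ∈ Finset.range i, x - ((t + 1 : ℕ) : ℂ) = x - 1 - t := by
    intro t _; push_cast; ring
  rw [Finset.prod_congr rfl this]
  push_cast
  ring

section fS
variable {α : ℂ} (hα : α ≠ 0)

omit hα in
lemma fSeries_zero_apply (n : ℤ) : fSeries 0 α n = α ^ (-n) := by
  simp [fSeries]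

include hα in
lemma laurentMul_X_sub_fSeries_zero :
    laurentMul (Polynomial.toLaurent (Polynomial.X - Polynomial.C α)) (fSeries 0 α) = 0 := by
  rw [laurentMul_X_sub]
  funext n
  simp only [fSeries, Finset.range_zero, Finset.prod_empty, one_mul, Pi.zero_apply]
  rw [show (-(n-1) : ℤ) = -n + 1 by ring, zpow_add₀ hα, zpow_one]
  ring

/-- the preimage of `fSeries i α` under `X - α` -/
noncomputable def hFun (i : ℕ) (α : ℂ) : ℤ → ℂ :=
  α⁻¹ • ((-(((i : ℂ) + 1)⁻¹)) • fSeries (i + 1) α - fSeries i α)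

include hα in
lemma laurentMul_X_sub_hFun (i : ℕ) :
    laurentMul (Polynomial.toLaurent (Polynomial.X - Polynomial.C α)) (hFun i α)
      = fSeries i α := by
  have hL := laurentMul_X_sub (a := α)
  set L := laurentMul (Polynomial.toLaurent (Polynomial.X - Polynomial.C α)) with hLdef
  have expand : L (hFun i α) = α⁻¹ • ((-(((i : ℂ) + 1)⁻¹)) • L (fSeries (i+1) α)
      - L (fSeries i α)) := by
    rw [hFun, map_smul, map_sub, map_smul]
  rw [expand, hL, hL]
  funext n
  simp only [Pi.smul_apply, Pi.sub_apply, smul_eq_mul]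
  have hi : ((i : ℂ) + 1) ≠ 0 := by
    have := Nat.cast_add_one_ne_zero (R := ℂ) i; push_cast at this; exact this
  have hcast : ((n - 1 : ℤ) : ℂ) = (n : ℂ) - 1 := by push_cast; ring
  have hzpow : α ^ (-(n - 1) : ℤ) = α * α ^ (-n : ℤ) := by
    rw [show (-(n-1) : ℤ) = 1 + -n by ring, zpow_add₀ hα, zpow_one]
  set A : ℂ := ∏ t ∈ Finset.range i, ((n : ℂ) - t) with hA
  set B : ℂ := ∏ t ∈ Finset.range i, ((n : ℂ) - 1 - t) with hB
  have hkey : A * ((n : ℂ) - i) = (n : ℂ) * B := prod_shift i n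
  have e1 : fSeries i α n = A * α ^ (-n : ℤ) := rfl
  have e2 : fSeries i α (n - 1) = B * (α * α ^ (-n : ℤ)) := by
    rw [fSeries, hzpow, hcast]
  have e3 : fSeries (i+1) α n = A * ((n : ℂ) - i) * α ^ (-n : ℤ) := by
    rw [fSeries, Finset.prod_range_succ]
  have e4 : fSeries (i+1) α (n - 1) = B * ((n : ℂ) - 1 - i) * (α * α ^ (-n : ℤ)) := by
    rw [fSeries, hzpow, Finset.prod_range_succ, hcast]
  rw [e1, e2, e3, e4]
  have hii : (((i : ℂ) + 1))⁻¹ * (((i : ℂ) + 1)) = 1 := inv_mul_cancel₀ hi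
  have hαα : α⁻¹ * α = 1 := inv_mul_cancel₀ hα
  linear_combination (α⁻¹ * (((i : ℂ) + 1))⁻¹ * α * α ^ (-n : ℤ)) * hkey
    + (α⁻¹ * α * α ^ (-n : ℤ) * B) * hii + (A * α ^ (-n : ℤ)) * hαα

include hα in
lemma geo_seq (u : ℤ → ℂ) (hrel : ∀ n : ℤ, u (n - 1) = α * u n) :
    ∀ n : ℤ, u n = u 0 * α ^ (-n) := by
  intro n
  induction n using Int.induction_on with
  | zero => simp
  | succ n ih =>
    have h := hrel ((n : ℤ) + 1)
    rw [add_sub_cancel_right, ih] at h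
    have e : α ^ (-((n : ℤ) + 1)) = α ^ (-(n : ℤ)) * α⁻¹ := by
      rw [show -((n : ℤ) + 1) = -(n : ℤ) - 1 by ring, zpow_sub_one₀ hα]
    calc u ((n : ℤ) + 1) = (α⁻¹ * α) * u ((n : ℤ) + 1) := by
          rw [inv_mul_cancel₀ hα, one_mul]
      _ = α⁻¹ * (u 0 * α ^ (-(n : ℤ))) := by rw [mul_assoc, ← h]
      _ = u 0 * α ^ (-((n : ℤ) + 1)) := by rw [e]; ring
  | pred n ih =>
    have h := hrel (-(n : ℤ))
    rw [h, ih, show (-(-(n : ℤ) - 1)) = -(-(n : ℤ)) + 1 by ring, zpow_add₀ hα, zpow_one]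
    ring

include hα in
lemma ker_X_sub (u : ℤ → ℂ)
    (h : laurentMul (Polynomial.toLaurent (Polynomial.X - Polynomial.C α)) u = 0) :
    u = u 0 • fSeries 0 α := by
  rw [laurentMul_X_sub] at h
  have hrel : ∀ n : ℤ, u (n - 1) = α * u n := by
    intro n
    have := congrFun h n
    simp only [Pi.zero_apply] at this
    exact sub_eq_zero.mp this
  funext n
  rw [Pi.smul_apply, smul_eq_mul, fSeries_zero_apply]
  exact geo_seq hα u hrel n

end fS

noncomputable def spanF (α : ℂ) (mm : ℕ) : Submodule ℂ (ℤ → ℂ) :=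
  Submodule.span ℂ ((fun i : ℕ => fSeries i α) '' Set.Iio mm)

lemma fSeries_mem_spanF {α : ℂ} {i mm : ℕ} (h : i < mm) : fSeries i α ∈ spanF α mm :=
  Submodule.subset_span ⟨i, h, rfl⟩

lemma hFun_mem_spanF {α : ℂ} {i mm : ℕ} (h : i + 1 < mm) : hFun i α ∈ spanF α mm := by
  rw [hFun]
  exact Submodule.smul_mem _ _ (Submodule.sub_mem _
    (Submodule.smul_mem _ _ (fSeries_mem_spanF h))
    (fSeries_mem_spanF (Nat.lt_of_succ_lt h)))

lemma ker_pow_X_sub {α : ℂ} (hα : α ≠ 0) :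
    ∀ (mm : ℕ) (u : ℤ → ℂ),
      laurentMul (Polynomial.toLaurent ((Polynomial.X - Polynomial.C α) ^ mm)) u = 0 →
      u ∈ spanF α mm := by
  intro mm
  induction mm with
  | zero =>
    intro u hu
    rw [pow_zero, map_one, laurentMul_one] at hu
    rw [hu]
    exact Submodule.zero_mem _
  | succ mm ih =>
    intro u hu
    set L := laurentMul (Polynomial.toLaurent (Polynomial.X - Polynomial.C α)) with hL
    set v := L u with hv
    have hv0 : laurentMul (Polynomial.toLaurent ((Polynomial.X - Polynomial.C α) ^ mm)) v = 0 := by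
      rw [hv, hL, ← laurentMul_mul, ← map_mul, ← pow_succ, hu]
    have hvmem := ih v hv0
    have hle : spanF α mm ≤ Submodule.map L (spanF α (mm + 1)) := by
      rw [spanF, Submodule.span_le]
      rintro x ⟨i, hi, rfl⟩
      simp only [Set.mem_Iio] at hi
      exact ⟨hFun i α, hFun_mem_spanF (Nat.succ_lt_succ hi), laurentMul_X_sub_hFun hα i⟩
    obtain ⟨u', hu'mem, hu'⟩ := hle hvmem
    have hker : L (u - u') = 0 := by rw [map_sub, hu', hv, sub_self]
    have hu0 := ker_X_sub hα (u - u') hker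
    have : u = u' + (u - u') := by abel
    rw [this, hu0]
    exact Submodule.add_mem _ hu'mem
      (Submodule.smul_mem _ _ (fSeries_mem_spanF (Nat.succ_pos mm)))

lemma coprime_split (Q₁ Q₂ : LaurentPolynomial ℂ) (hco : IsCoprime Q₁ Q₂) (u : ℤ → ℂ)
    (h : laurentMul (Q₁ * Q₂) u = 0) :
    ∃ u₁ u₂, laurentMul Q₁ u₁ = 0 ∧ laurentMul Q₂ u₂ = 0 ∧ u = u₁ + u₂ := by
  obtain ⟨A, B, hAB⟩ := hco
  refine ⟨laurentMul (B * Q₂) u, laurentMul (A * Q₁) u, ?_, ?_, ?_⟩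
  · rw [← laurentMul_mul, mul_left_comm Q₁ B Q₂, laurentMul_mul, h,
      map_zero]
  · rw [← laurentMul_mul, show Q₂ * (A * Q₁) = A * (Q₁ * Q₂) by rw [mul_left_comm, mul_comm Q₂ Q₁], laurentMul_mul, h,
      map_zero]
  · rw [← laurentMul_add_poly, add_comm (B * Q₂) (A * Q₁), hAB,
      laurentMul_one]

lemma ker_prod {k : ℕ} (α : Fin k → ℂ) (m : Fin k → ℕ) (hα0 : ∀ j, α j ≠ 0)
    (hαinj : Function.Injective α) :
    ∀ s : Finset (Fin k), ∀ u : ℤ → ℂ,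
      laurentMul (Polynomial.toLaurent
        (∏ j ∈ s, (Polynomial.X - Polynomial.C (α j)) ^ m j)) u = 0 →
      u ∈ Submodule.span ℂ (⋃ j ∈ s, (fun i : ℕ => fSeries i (α j)) '' Set.Iio (m j)) := by
  intro s
  induction s using Finset.induction_on with
  | empty =>
    intro u hu
    rw [Finset.prod_empty, map_one, laurentMul_one] at hu
    rw [hu]
    exact Submodule.zero_mem _
  | @insert a s ha ih =>
    intro u hu
    rw [Finset.prod_insert ha, map_mul] at hu
    have hco : IsCoprime (Polynomial.toLaurent ((Polynomial.X - Polynomial.C (α a)) ^ m a))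
        (Polynomial.toLaurent (∏ j ∈ s, (Polynomial.X - Polynomial.C (α j)) ^ m j)) := by
      have hcp : IsCoprime ((Polynomial.X - Polynomial.C (α a)) ^ m a)
          (∏ j ∈ s, (Polynomial.X - Polynomial.C (α j)) ^ m j) := by
        refine IsCoprime.prod_right fun j hj => ?_
        have hne : a ≠ j := fun h => ha (h ▸ hj)
        exact (Polynomial.pairwise_coprime_X_sub_C hαinj hne).pow
      exact hcp.map Polynomial.toLaurent
    obtain ⟨u₁, u₂, h1, h2, hu12⟩ := coprime_split _ _ hco u hu
    have m1 : u₁ ∈ Submodule.span ℂ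
        (⋃ j ∈ insert a s, (fun i : ℕ => fSeries i (α j)) '' Set.Iio (m j)) := by
      have := ker_pow_X_sub (hα0 a) (m a) u₁ h1
      refine Submodule.span_mono ?_ this
      intro x hx
      exact Set.mem_biUnion (Finset.mem_insert_self a s) hx
    have m2 : u₂ ∈ Submodule.span ℂ
        (⋃ j ∈ insert a s, (fun i : ℕ => fSeries i (α j)) '' Set.Iio (m j)) := by
      refine Submodule.span_mono ?_ (ih u₂ h2)
      refine Set.iUnion₂_subset fun j hj => ?_
      intro x hx
      exact Set.mem_biUnion (Finset.mem_insert_of_mem hj) hx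
    rw [hu12]
    exact Submodule.add_mem _ m1 m2

section trsec
lemma lscale_eq_sum (s : ℂ) (Q : LaurentPolynomial ℂ) :
    lscale s Q = Q.coeff.sum (fun j a => C (a * s ^ j) * T j) := rfl

lemma lscale_single (s : ℂ) (j : ℤ) (a : ℂ) :
    lscale s (AddMonoidAlgebra.single j a) = C (a * s ^ j) * T j := by
  rw [lscale_eq_sum, AddMonoidAlgebra.sum_single_index]
  simp

lemma lscale_add (s : ℂ) (Q₁ Q₂ : LaurentPolynomial ℂ) :
    lscale s (Q₁ + Q₂) = lscale s Q₁ + lscale s Q₂ := by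
  rw [lscale_eq_sum, lscale_eq_sum, lscale_eq_sum, AddMonoidAlgebra.coeff_add,
    Finsupp.sum_add_index' (by simp) (fun j a b => by rw [add_mul, map_add, add_mul])]

lemma lscale_mul_T (s : ℂ) (Q : LaurentPolynomial ℂ) (n : ℤ) :
    lscale s (Q * T n) = Q.coeff.sum (fun j a => C (a * s ^ (j + n)) * T (j + n)) := by
  induction Q using AddMonoidAlgebra.induction_linear with
  | zero =>
    rw [zero_mul, AddMonoidAlgebra.coeff_zero, Finsupp.sum_zero_index]
    rw [show (0 : LaurentPolynomial ℂ) = AddMonoidAlgebra.single 0 0 by simp, lscale_single]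
    simp
  | add f g hf hg =>
    rw [add_mul, lscale_add, hf, hg, AddMonoidAlgebra.coeff_add,
      Finsupp.sum_add_index' (by simp) (fun j a b => by rw [add_mul, map_add, add_mul])]
  | single j a =>
    rw [AddMonoidAlgebra.sum_single_index (by simp), single_eq_C_mul_T, mul_T_assoc,
      ← single_eq_C_mul_T, lscale_single]

variable (tr : LaurentPolynomial ℂ →ₗ[ℂ] ℂ)

lemma tr_C_mul_T (b : ℂ) (j : ℤ) : tr (C b * T j) = b * tr (T j) := by
  rw [← single_eq_C_mul_T, show (AddMonoidAlgebra.single j b : LaurentPolynomial ℂ) = b • T j by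
    rw [show (T j : LaurentPolynomial ℂ) = AddMonoidAlgebra.single j 1 from rfl, AddMonoidAlgebra.smul_single,
      smul_eq_mul, mul_one], map_smul, smul_eq_mul]

lemma tr_lscale_mul_T (s : ℂ) (Q : LaurentPolynomial ℂ) (n : ℤ) :
    tr (lscale s (Q * T n)) = Q.coeff.sum (fun j a => a * s ^ (j + n) * tr (T (j + n))) := by
  rw [lscale_mul_T, map_finsuppSum]
  exact Finsupp.sum_congr fun j _ => tr_C_mul_T tr _ _

lemma tr_T_mul_lscale_mul_T (l : ℤ) (s : ℂ) (Q : LaurentPolynomial ℂ) (n : ℤ) :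
    tr (T l * lscale s (Q * T n))
      = Q.coeff.sum (fun j a => a * s ^ (j + n) * tr (T (l + (j + n)))) := by
  rw [lscale_mul_T, Finsupp.sum, Finset.mul_sum, map_sum, Finsupp.sum]
  refine Finset.sum_congr rfl fun j _ => ?_
  have hcomm : (T l : LaurentPolynomial ℂ) * (C (Q.coeff j * s ^ (j + n)) * T (j + n))
      = C (Q.coeff j * s ^ (j + n)) * T (l + (j + n)) := by
    rw [mul_left_comm (T l) (C (Q.coeff j * s ^ (j + n))) (T (j + n)), ← T_add]
  rw [hcomm, tr_C_mul_T]

end trsec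

/-- let `0 < q < 1`, `l ∈ ℤ`, and let `P` be a nonzero Laurent
polynomial with distinct nonzero roots `α_1, …, α_k` of multiplicities
`m_1, …, m_k` (i.e. `P = z^d · c · ∏_j (z - α_j)^{m_j}`, `c ≠ 0`). Let
`tr : ℂ[z,z⁻¹] → ℂ` be linear with `tr(P(qz)R(qz)) = tr(z^l P(q⁻¹z)R(q⁻¹z))`
for all `R`, and define `wₘ = tr(z^{-m})`. Then there are complex numbers
`r_{i,j}` with `w(q⁻¹z) - q^l (z^l·w(qz)) = ∑_{i,j} r_{i,j} f_{i,j}` in `V`. -/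
theorem trace_series_diff_in_span (q : ℝ) (hq0 : 0 < q) (hq1 : q < 1)
    (l : ℤ) (P : LaurentPolynomial ℂ) (hP : P ≠ 0)
    (k : ℕ) (α : Fin k → ℂ) (m : Fin k → ℕ) (c : ℂ) (d : ℤ)
    (hc : c ≠ 0) (hα0 : ∀ j, α j ≠ 0) (hαinj : Function.Injective α)
    (hm : ∀ j, 0 < m j)
    (hPfac : P = T d * Polynomial.toLaurent
      (Polynomial.C c * ∏ j, (Polynomial.X - Polynomial.C (α j)) ^ m j))
    (tr : LaurentPolynomial ℂ →ₗ[ℂ] ℂ)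
    (htr : ∀ R : LaurentPolynomial ℂ,
      tr (lscale (q : ℂ) (P * R)) = tr (T l * lscale ((q : ℂ)⁻¹) (P * R)))
    (w : ℤ → ℂ) (hw : ∀ m : ℤ, w m = tr (T (-m))) :
    ∃ r : (Σ j : Fin k, Fin (m j)) → ℂ,
      vscale ((q : ℂ)⁻¹) w - ((q : ℂ) ^ l) • laurentMul (T l) (vscale (q : ℂ) w)
        = ∑ p : Σ j : Fin k, Fin (m j), r p • fSeries p.2.val (α p.1) := by
  have hq' : (q : ℂ) ≠ 0 := by
    simp only [ne_eq, Complex.ofReal_eq_zero]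
    exact hq0.ne'
  set u : ℤ → ℂ := vscale ((q : ℂ)⁻¹) w - ((q : ℂ) ^ l) • laurentMul (T l) (vscale (q : ℂ) w)
    with hu
  have hPu : laurentMul P u = 0 := by
    funext n
    have h := htr (T (-n))
    rw [tr_lscale_mul_T tr, tr_T_mul_lscale_mul_T tr] at h
    rw [laurentMul_apply, Pi.zero_apply]
    have hterm : ∀ j ∈ P.coeff.support, P.coeff j * u (n - j)
        = (fun (j : ℤ) (a : ℂ) => a * (q : ℂ) ^ (j + -n) * tr (T (j + -n))) j (P.coeff j)
          - (fun (j : ℤ) (a : ℂ) =>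
              a * ((q : ℂ)⁻¹) ^ (j + -n) * tr (T (l + (j + -n)))) j (P.coeff j) := by
      intro j _
      simp only [hu, Pi.sub_apply, Pi.smul_apply, smul_eq_mul, vscale, laurentMul_T]
      rw [hw (n - j), hw (n - j - l), show -(n - j) = j + -n from by ring,
        show -(n - j - l) = l + (j + -n) from by ring]
      have e1 : ((q : ℂ)⁻¹) ^ (n - j) = (q : ℂ) ^ (j + -n) := by
        rw [inv_zpow, ← zpow_neg]
        congr 1
        ring
      have e2 : (q : ℂ) ^ (l : ℤ) * (q : ℂ) ^ (n - j - l) = ((q : ℂ)⁻¹) ^ (j + -n) := by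
        rw [← zpow_add₀ hq', inv_zpow, ← zpow_neg]
        congr 1
        ring
      rw [e1]
      linear_combination (-(P.coeff j) * tr (T (l + (j + -n)))) * e2
    rw [Finsupp.sum, Finset.sum_congr rfl hterm, Finset.sum_sub_distrib, sub_eq_zero]
    rw [Finsupp.sum, Finsupp.sum] at h
    exact h
  rw [hPfac, laurentMul_mul] at hPu
  have h1 : laurentMul (Polynomial.toLaurent
      (Polynomial.C c * ∏ j, (Polynomial.X - Polynomial.C (α j)) ^ m j)) u = 0 := by
    funext n
    have h := congrFun hPu (n + d)
    rw [laurentMul_T] at h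
    simpa using h
  rw [map_mul, laurentMul_mul, Polynomial.toLaurent_C] at h1
  have h2 : laurentMul (Polynomial.toLaurent
      (∏ j, (Polynomial.X - Polynomial.C (α j)) ^ m j)) u = 0 := by
    funext n
    have h := congrFun h1 n
    have hC : (C c : LaurentPolynomial ℂ) = AddMonoidAlgebra.single 0 c := by
      rw [single_eq_C_mul_T, T_zero, mul_one]
    rw [hC, laurentMul_single] at h
    simp only [Pi.zero_apply, sub_zero] at h
    exact (mul_eq_zero.mp h).resolve_left hc
  have hmem := ker_prod α m hα0 hαinj Finset.univ u h2
  have hset : (⋃ j ∈ (Finset.univ : Finset (Fin k)),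
      (fun i : ℕ => fSeries i (α j)) '' Set.Iio (m j))
      = Set.range (fun p : (Σ j : Fin k, Fin (m j)) => fSeries p.2.val (α p.1)) := by
    ext x
    simp only [Set.mem_iUnion, Set.mem_image, Set.mem_Iio, Set.mem_range, Finset.mem_univ,
      Set.iUnion_true, exists_true_left]
    constructor
    · rintro ⟨j, i, hi, rfl⟩
      exact ⟨⟨j, ⟨i, hi⟩⟩, rfl⟩
    · rintro ⟨⟨j, i⟩, rfl⟩
      exact ⟨j, i.val, i.isLt, rfl⟩
  rw [hset] at hmem
  obtain ⟨r, hr⟩ := (Submodule.mem_span_range_iff_exists_fun ℂ).mp hmem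
  exact ⟨r, hr.symm⟩
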